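/- arXiv:1911.09412 — 4 statements merged into one kernel-verified Lean document; each statement's English description precedes it below -/
import Mathlib

section
/- (Arrow decomposition theorem.) Let n ≥ 3, m ≥ 1, p ≥ 2, and let I₁,…,I_p ⊆ {1,…,n} with I₁ ∪ … ∪ I_p = {1,…,n}. Assume: (Assumption 1) for every k there exists ℓ ≠ k with I_k ∩ I_ℓ ≠ ∅; (Assumption 2) no I_ℓ is a subset of another I_k; also m < |I_k ∩ I_ℓ| for every pair k < ℓ with I_k ∩ I_ℓ ≠ ∅. For k = 1,…,p let A_k be a symmetric positive semidefinite n×n matrix supported on I_k and B_k an n×m matrix row-supported on I_k. Assume A := Σ_{k=1}^p A_k is positive definite and let C be a symmetric positive definite m×m matrix. Define M_k = [A_k, B_k; B_kᵀ, 0] and M = Σ_{k=1}^p M_k + [0, 0; 0, C]. Then the following are equivalent: (i) M ⪰ 0; (ii) there exist n×m matrices D_{k,ℓ}, for 1 ≤ k < ℓ ≤ p, each row-supported on I_k ∩ I_ℓ (and equal to zero whenever I_k ∩ I_ℓ = ∅), and symmetric m×m matrices C₁,…,C_p with Σ_{k=1}^p C_k = C, such that for every k = 1,…,p, setting G_k :=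 − Σ_{ℓ<k} D_{ℓ,k} + Σ_{ℓ>k} D_{k,ℓ}, the matrix M̃_k := [A_k, B_k + G_k; (B_k + G_k)ᵀ, C_k] is positive semidefinite (and consequently M = Σ_{k=1}^p M̃_k). -/
open Matrix

/-- An `n×n` matrix is supported on `I` if `Y i j = 0` whenever `i ∉ I` or `j ∉ I`. -/
def MatSupportedOn {n : ℕ} (Y : Matrix (Fin n) (Fin n) ℝ) (I : Finset (Fin n)) : Prop :=
  ∀ i j, (i ∉ I ∨ j ∉ I) → Y i j = 0

/-- An `n×m` matrix is row-supported on `I` if its `i`-th row vanishes for `i ∉ I`. -/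
def RowSupportedOn {n m : ℕ} (B : Matrix (Fin n) (Fin m) ℝ) (I : Finset (Fin n)) : Prop :=
  ∀ i, i ∉ I → ∀ j, B i j = 0


-- helper 1: sum of fromBlocks
lemma aux_sum_fromBlocks {p : Type*} [Fintype p] {n m : ℕ}
    (f : p → Matrix (Fin n) (Fin n) ℝ) (g : p → Matrix (Fin n) (Fin m) ℝ)
    (h : p → Matrix (Fin m) (Fin n) ℝ) (e : p → Matrix (Fin m) (Fin m) ℝ) :
    ∑ k, Matrix.fromBlocks (f k) (g k) (h k) (e k)
      = Matrix.fromBlocks (∑ k, f k) (∑ k, g k) (∑ k, h k) (∑ k, e k) := by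
  ext (i|i) (j|j) <;> simp [Matrix.sum_apply]

-- helper 2: block diagonal PSD
lemma aux_fromBlocks_psd {n m : ℕ} {A : Matrix (Fin n) (Fin n) ℝ} {E : Matrix (Fin m) (Fin m) ℝ}
    (hA : A.PosSemidef) (hE : E.PosSemidef) :
    (Matrix.fromBlocks A 0 0 E).PosSemidef := by
  rw [Matrix.posSemidef_iff_dotProduct_mulVec]
  constructor
  · have hsA : Aᵀ = A := A.conjTranspose_eq_transpose_of_trivial ▸ hA.1
    have hsE : Eᵀ = E := E.conjTranspose_eq_transpose_of_trivial ▸ hE.1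
    unfold Matrix.IsHermitian
    ext (i|i) (j|j) <;> simp [Matrix.conjTranspose_apply]
    · exact congrFun (congrFun hsA i) j
    · exact congrFun (congrFun hsE i) j
  · intro x
    rw [← Sum.elim_comp_inl_inr x]
    simp only [Matrix.fromBlocks_mulVec, Function.star_sumElim]
    rw [sumElim_dotProduct_sumElim]
    simp only [Matrix.zero_mulVec, add_zero, zero_add]
    exact add_nonneg (hA.dotProduct_mulVec_nonneg _) (hE.dotProduct_mulVec_nonneg _)

-- helper 3: trichotomy sum
lemma aux_tri {p : ℕ} (k : Fin p) (f : Fin p → ℝ) :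
    ∑ ℓ, f ℓ = (∑ ℓ ∈ Finset.univ.filter (fun ℓ => ℓ < k), f ℓ) + f k
      + ∑ ℓ ∈ Finset.univ.filter (fun ℓ => k < ℓ), f ℓ := by
  classical
  rw [← Finset.sum_filter_add_sum_filter_not Finset.univ (fun ℓ => ℓ < k) f]
  have : Finset.univ.filter (fun ℓ => ¬ ℓ < k) = insert k (Finset.univ.filter (fun ℓ => k < ℓ)) := by
    ext ℓ; simp [not_lt, le_iff_lt_or_eq, eq_comm, or_comm]
  rw [this, Finset.sum_insert (by simp), add_assoc]

/-- Arrow decomposition theorem. -/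
theorem stmt3 (n m p : ℕ) (hn : 3 ≤ n) (hm : 1 ≤ m) (hp : 2 ≤ p)
    (I : Fin p → Finset (Fin n))
    (hcover : ∀ i : Fin n, ∃ k, i ∈ I k)
    -- Assumption 1
    (h1 : ∀ k, ∃ ℓ, ℓ ≠ k ∧ (I k ∩ I ℓ).Nonempty)
    -- Assumption 2
    (h2 : ∀ k ℓ, k ≠ ℓ → ¬ I ℓ ⊆ I k)
    -- m is smaller than every nonempty overlap
    (hsize : ∀ k ℓ, k < ℓ → (I k ∩ I ℓ).Nonempty → m < (I k ∩ I ℓ).card)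
    (A : Fin p → Matrix (Fin n) (Fin n) ℝ)
    (hAsymm : ∀ k, (A k).IsSymm)
    (hApsd : ∀ k, (A k).PosSemidef)
    (hAsupp : ∀ k, MatSupportedOn (A k) (I k))
    (B : Fin p → Matrix (Fin n) (Fin m) ℝ)
    (hBsupp : ∀ k, RowSupportedOn (B k) (I k))
    (hApd : (∑ k, A k).PosDef)
    (C : Matrix (Fin m) (Fin m) ℝ) (hCsymm : C.IsSymm) (hC : C.PosDef)
    (M : Matrix (Fin n ⊕ Fin m) (Fin n ⊕ Fin m) ℝ)
    (hM : M = (∑ k, Matrix.fromBlocks (A k) (B k) (B k)ᵀ 0)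
              + Matrix.fromBlocks 0 0 0 C) :
    M.PosSemidef ↔
      ∃ D : Fin p → Fin p → Matrix (Fin n) (Fin m) ℝ,
      ∃ Cs : Fin p → Matrix (Fin m) (Fin m) ℝ,
        (∀ k ℓ, k < ℓ → RowSupportedOn (D k ℓ) (I k ∩ I ℓ)) ∧
        (∀ k ℓ, k < ℓ → I k ∩ I ℓ = ∅ → D k ℓ = 0) ∧
        (∀ k, (Cs k).IsSymm) ∧
        (∑ k, Cs k) = C ∧
        (∀ k, (Matrix.fromBlocks (A k)
                (B k + (- (∑ ℓ ∈ Finset.univ.filter (fun ℓ => ℓ < k), D ℓ k)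
                        + (∑ ℓ ∈ Finset.univ.filter (fun ℓ => k < ℓ), D k ℓ)))
                (B k + (- (∑ ℓ ∈ Finset.univ.filter (fun ℓ => ℓ < k), D ℓ k)
                        + (∑ ℓ ∈ Finset.univ.filter (fun ℓ => k < ℓ), D k ℓ)))ᵀ
                (Cs k)).PosSemidef) ∧
        M = ∑ k, Matrix.fromBlocks (A k)
                (B k + (- (∑ ℓ ∈ Finset.univ.filter (fun ℓ => ℓ < k), D ℓ k)
                        + (∑ ℓ ∈ Finset.univ.filter (fun ℓ => k < ℓ), D k ℓ)))
                (B k + (- (∑ ℓ ∈ Finset.univ.filter (fun ℓ => ℓ < k), D ℓ k)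
                        + (∑ ℓ ∈ Finset.univ.filter (fun ℓ => k < ℓ), D k ℓ)))ᵀ
                (Cs k) := by
  classical
  constructor
  · -- forward direction
    intro hMpsd
    set Asum : Matrix (Fin n) (Fin n) ℝ := ∑ k, A k with hAsumdef
    set Bsum : Matrix (Fin n) (Fin m) ℝ := ∑ k, B k with hBsumdef
    have hMblock : M = Matrix.fromBlocks Asum Bsum Bsumᵀ C := by
      rw [hM, aux_sum_fromBlocks]
      ext (i|i) (j|j) <;> simp [hAsumdef, hBsumdef, Matrix.sum_apply]
    have hAsymmS : Asumᵀ = Asum :=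
      Asum.conjTranspose_eq_transpose_of_trivial ▸ hApd.1
    haveI : Invertible Asum := Asum.invertibleOfIsUnitDet hApd.det_pos.ne'.isUnit
    have hdet : IsUnit Asum.det := hApd.det_pos.ne'.isUnit
    set W : Matrix (Fin n) (Fin m) ℝ := Asum⁻¹ * Bsum with hWdef
    have hAW : Asum * W = Bsum := by
      rw [hWdef, ← Matrix.mul_assoc, Matrix.mul_nonsing_inv _ hdet, Matrix.one_mul]
    have hWT : Wᵀ = Bsumᵀ * Asum⁻¹ := by
      rw [hWdef, Matrix.transpose_mul, Matrix.transpose_nonsing_inv, hAsymmS]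
    set G : Fin p → Matrix (Fin n) (Fin m) ℝ := fun k => A k * W - B k with hGdef
    have hGsum : ∑ k, G k = 0 := by
      simp only [hGdef]
      rw [Finset.sum_sub_distrib, ← Matrix.sum_mul, ← hAsumdef, ← hBsumdef, hAW, sub_self]
    have hGsupp : ∀ k i, i ∉ I k → ∀ j, G k i j = 0 := by
      intro k i hi j
      have h1 : (A k * W) i j = 0 := by
        rw [Matrix.mul_apply]
        exact Finset.sum_eq_zero fun t _ => by rw [hAsupp k i t (Or.inl hi), zero_mul]
      simp [hGdef, h1, hBsupp k i hi j]
    -- minimal covering index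
    have hTne : ∀ i : Fin n, (Finset.univ.filter (fun k => i ∈ I k)).Nonempty := by
      intro i; obtain ⟨k, hk⟩ := hcover i; exact ⟨k, by simp [hk]⟩
    set k0 : Fin n → Fin p := fun i => (Finset.univ.filter (fun k => i ∈ I k)).min' (hTne i)
      with hk0def
    have hk0mem : ∀ i, i ∈ I (k0 i) := by
      intro i
      have := (Finset.univ.filter (fun k => i ∈ I k)).min'_mem (hTne i)
      simpa using this
    have hk0min : ∀ i k, i ∈ I k → k0 i ≤ k := by
      intro i k hk
      exact Finset.min'_le _ _ (by simp [hk])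
    -- the D matrices
    set D : Fin p → Fin p → Matrix (Fin n) (Fin m) ℝ :=
      fun k ℓ => Matrix.of fun i j => if k = k0 i ∧ i ∈ I ℓ then -(G ℓ i j) else 0 with hDdef
    -- key identity
    have hkey : ∀ k, (- (∑ ℓ ∈ Finset.univ.filter (fun ℓ => ℓ < k), D ℓ k)
                      + (∑ ℓ ∈ Finset.univ.filter (fun ℓ => k < ℓ), D k ℓ)) = G k := by
      intro k
      ext i j
      simp only [Matrix.add_apply, Matrix.neg_apply, Matrix.sum_apply, hDdef, Matrix.of_apply]
      have hzero : ∑ ℓ, G ℓ i j = 0 := by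
        rw [← Matrix.sum_apply]
        · rw [hGsum]; rfl
      rw [aux_tri k (fun ℓ => G ℓ i j)] at hzero
      by_cases hk : k = k0 i
      · -- k is the minimal index
        have hs1 : ∑ ℓ ∈ Finset.univ.filter (fun ℓ => ℓ < k), (if ℓ = k0 i ∧ i ∈ I k then -(G k i j) else 0) = 0 := by
          apply Finset.sum_eq_zero
          intro ℓ hℓ
          simp only [Finset.mem_filter] at hℓ
          have hne : ℓ ≠ k0 i := by
            intro h
            have h2 := hℓ.2
            rw [h, ← hk] at h2
            exact absurd h2 (lt_irrefl k)
          simp [hne]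
        have hs2 : ∑ ℓ ∈ Finset.univ.filter (fun ℓ => k < ℓ), (if k = k0 i ∧ i ∈ I ℓ then -(G ℓ i j) else 0)
            = - ∑ ℓ ∈ Finset.univ.filter (fun ℓ => k < ℓ), G ℓ i j := by
          rw [← Finset.sum_neg_distrib]
          apply Finset.sum_congr rfl
          intro ℓ hℓ
          by_cases hℓI : i ∈ I ℓ
          · simp [hk, hℓI]
          · simp [hℓI, hGsupp ℓ i hℓI j]
        have hlow : ∑ ℓ ∈ Finset.univ.filter (fun ℓ => ℓ < k), G ℓ i j = 0 := by
          apply Finset.sum_eq_zero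
          intro ℓ hℓ
          simp only [Finset.mem_filter] at hℓ
          have : i ∉ I ℓ := fun h => absurd (hk0min i ℓ h) (by rw [← hk]; exact not_le.mpr hℓ.2)
          exact hGsupp ℓ i this j
        rw [hs1, hs2]
        rw [hlow] at hzero
        linarith
      · -- k is not the minimal index
        have hs2 : ∑ ℓ ∈ Finset.univ.filter (fun ℓ => k < ℓ), (if k = k0 i ∧ i ∈ I ℓ then -(G ℓ i j) else 0) = 0 := by
          apply Finset.sum_eq_zero; intro ℓ _; simp [hk]
        rw [hs2, add_zero]
        by_cases hik : i ∈ I k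
        · have hlt : k0 i < k := lt_of_le_of_ne (hk0min i k hik) (fun h => hk h.symm)
          have hs1 : ∑ ℓ ∈ Finset.univ.filter (fun ℓ => ℓ < k), (if ℓ = k0 i ∧ i ∈ I k then -(G k i j) else 0) = -(G k i j) := by
            simp only [hik, and_true]
            rw [Finset.sum_ite_eq' (Finset.univ.filter fun ℓ => ℓ < k) (k0 i)
              (fun _ => -(G k i j))]
            simp [hlt]
          rw [hs1]; ring
        · have hs1 : ∑ ℓ ∈ Finset.univ.filter (fun ℓ => ℓ < k), (if ℓ = k0 i ∧ i ∈ I k then -(G k i j) else 0) = 0 := by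
            apply Finset.sum_eq_zero; intro ℓ _; simp [hik]
          rw [hs1, hGsupp k i hik j]; ring
    -- Schur complement
    set S : Matrix (Fin m) (Fin m) ℝ := C - Bsumᵀ * Asum⁻¹ * Bsum with hSdef
    have hSpsd : S.PosSemidef := by
      have h := (Matrix.PosDef.fromBlocks₁₁ Bsum C hApd).mp
      rw [Bsum.conjTranspose_eq_transpose_of_trivial] at h
      rw [hSdef]
      rw [← Bsum.conjTranspose_eq_transpose_of_trivial]
      exact h (hMblock ▸ hMpsd)
    set k1 : Fin p := ⟨0, by omega⟩ with hk1def
    set Cs : Fin p → Matrix (Fin m) (Fin m) ℝ :=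
      fun k => Wᵀ * A k * W + (if k = k1 then S else 0) with hCsdef
    clear_value Asum Bsum W G k0 D S k1 Cs
    refine ⟨D, Cs, ?_, ?_, ?_, ?_, ?_, ?_⟩
    · -- row support of D
      intro k ℓ hkl i hi j
      simp only [hDdef, Matrix.of_apply]
      rw [Finset.mem_inter] at hi
      push_neg at hi
      by_cases hik : i ∈ I k
      · simp [hi hik]
      · have : k ≠ k0 i := fun h => hik (h ▸ hk0mem i)
        simp [this]
    · -- D vanishes on empty intersections
      intro k ℓ hkl hempty
      ext i j
      simp only [hDdef, Matrix.of_apply]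
      by_cases hik : i ∈ I k
      · have : i ∉ I ℓ := fun h => by
          have : i ∈ I k ∩ I ℓ := Finset.mem_inter.mpr ⟨hik, h⟩
          rw [hempty] at this; exact absurd this (Finset.notMem_empty i)
        simp [this]
      · have : k ≠ k0 i := fun h => hik (h ▸ hk0mem i)
        simp [this]
    · -- symmetry of Cs
      intro k
      unfold Matrix.IsSymm
      simp only [hCsdef]
      have h1 : (Wᵀ * A k * W)ᵀ = Wᵀ * A k * W := by
        rw [Matrix.transpose_mul, Matrix.transpose_mul, Matrix.transpose_transpose,
          (hAsymm k).eq, Matrix.mul_assoc]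
      have h2 : Sᵀ = S := by
        rw [hSdef, Matrix.transpose_sub, hCsymm.eq, Matrix.transpose_mul, Matrix.transpose_mul,
          Matrix.transpose_transpose, Matrix.transpose_nonsing_inv, hAsymmS, Matrix.mul_assoc]
      have h3 : (if k = k1 then S else 0)ᵀ = (if k = k1 then S else 0) := by
        by_cases hk : k = k1 <;> simp [hk, h2]
      rw [Matrix.transpose_add, h1, h3]
    · -- sum of Cs
      simp only [hCsdef]
      rw [Finset.sum_add_distrib, Finset.sum_ite_eq' Finset.univ k1]
      simp only [Finset.mem_univ, if_true]
      have h1 : ∑ k, Wᵀ * A k * W = Wᵀ * Asum * W := by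
        rw [← Matrix.sum_mul, ← Matrix.mul_sum, ← hAsumdef]
      rw [h1, Matrix.mul_assoc, hAW, hWT, hSdef]
      abel
    · -- each block is PSD
      intro k
      have hBG : B k + (- (∑ ℓ ∈ Finset.univ.filter (fun ℓ => ℓ < k), D ℓ k)
                      + (∑ ℓ ∈ Finset.univ.filter (fun ℓ => k < ℓ), D k ℓ)) = A k * W := by
        rw [hkey k, hGdef]; simp
      rw [hBG]
      have hAkT : (A k)ᵀ = A k := (hAsymm k).eq
      have hfact : Matrix.fromBlocks (A k) (A k * W) (A k * W)ᵀ (Cs k)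
          = (Matrix.fromBlocks 1 W 0 1)ᵀ * (Matrix.fromBlocks (A k) 0 0 0) * (Matrix.fromBlocks 1 W 0 1)
            + Matrix.fromBlocks 0 0 0 (if k = k1 then S else 0) := by
        have hT : (A k * W)ᵀ = Wᵀ * A k := by
          rw [Matrix.transpose_mul, hAkT]
        simp only [hCsdef]
        rw [hT, Matrix.fromBlocks_transpose, Matrix.fromBlocks_multiply, Matrix.fromBlocks_multiply,
          Matrix.fromBlocks_add, Matrix.fromBlocks_inj]
        refine ⟨by simp, by simp, by simp, by simp [Matrix.mul_assoc]⟩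
      rw [hfact]
      apply Matrix.PosSemidef.add
      · have h0 : (Matrix.fromBlocks (A k) 0 0 (0 : Matrix (Fin m) (Fin m) ℝ)).PosSemidef :=
          aux_fromBlocks_psd (hApsd k) Matrix.PosSemidef.zero
        have := h0.conjTranspose_mul_mul_same (Matrix.fromBlocks (1 : Matrix (Fin n) (Fin n) ℝ) W (0 : Matrix (Fin m) (Fin n) ℝ) (1 : Matrix (Fin m) (Fin m) ℝ))
        rwa [Matrix.conjTranspose_eq_transpose_of_trivial] at this
      · by_cases hk : k = k1
        · simpa [hk] using aux_fromBlocks_psd Matrix.PosSemidef.zero hSpsd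
        · simp only [hk, if_false]
          exact aux_fromBlocks_psd Matrix.PosSemidef.zero Matrix.PosSemidef.zero
    · -- M equals the sum
      have hBG : ∀ k, B k + (- (∑ ℓ ∈ Finset.univ.filter (fun ℓ => ℓ < k), D ℓ k)
                      + (∑ ℓ ∈ Finset.univ.filter (fun ℓ => k < ℓ), D k ℓ)) = A k * W := by
        intro k; rw [hkey k, hGdef]; simp
      calc M = Matrix.fromBlocks Asum Bsum Bsumᵀ C := hMblock
        _ = ∑ k, Matrix.fromBlocks (A k) (A k * W) (A k * W)ᵀ (Cs k) := by
            rw [aux_sum_fromBlocks]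
            have h1 : ∑ k, A k * W = Bsum := by rw [← Matrix.sum_mul, ← hAsumdef, hAW]
            have h2 : ∑ k, (A k * W)ᵀ = Bsumᵀ := by rw [← Matrix.transpose_sum, h1]
            have h3 : ∑ k, Cs k = C := by
              simp only [hCsdef]
              rw [Finset.sum_add_distrib, Finset.sum_ite_eq' Finset.univ k1]
              simp only [Finset.mem_univ, if_true]
              have h1 : ∑ k, Wᵀ * A k * W = Wᵀ * Asum * W := by
                rw [← Matrix.sum_mul, ← Matrix.mul_sum, ← hAsumdef]
              rw [h1, Matrix.mul_assoc, hAW, hWT, hSdef]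
              abel
            rw [h1, h2, h3, ← hAsumdef]
        _ = _ := by
            apply Finset.sum_congr rfl
            intro k _
            rw [hBG k]
  · -- reverse direction
    rintro ⟨D, Cs, -, -, -, -, hpsd, hsum⟩
    rw [hsum]
    exact Finset.sum_induction _ Matrix.PosSemidef (fun a b ha hb => ha.add hb)
      Matrix.PosSemidef.zero (fun k _ => hpsd k)
end

section
/- Let K be a symmetric real n×n matrix, f ∈ ℝⁿ and γ ∈ ℝ. The (n+1)×(n+1) block matrix Z = [K, f; fᵀ, γ] is positive semidefinite if and only if K is positive semidefinite and there exists u ∈ ℝⁿ with K u = f and fᵀu ≤ γ. -/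
open Matrix

/-- The symmetric `(n+1)×(n+1)` block matrix `[K, f; fᵀ, γ]`. -/
def ArrowMat {n : ℕ} (K : Matrix (Fin n) (Fin n) ℝ) (f : Fin n → ℝ) (γ : ℝ) :
    Matrix (Fin n ⊕ Unit) (Fin n ⊕ Unit) ℝ :=
  Matrix.fromBlocks K (Matrix.of fun i (_ : Unit) => f i)
    (Matrix.of fun (_ : Unit) j => f j) (Matrix.of fun (_ _ : Unit) => γ)

lemma exists_mulVec_eq_aux {n : ℕ} (K : Matrix (Fin n) (Fin n) ℝ) (hK : K.IsSymm)
    (f : Fin n → ℝ) (h : ∀ v, K.mulVec v = 0 → f ⬝ᵥ v = 0) :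
    ∃ u, K.mulVec u = f := by
  have hH : K.IsHermitian := by
    ext i j; simp [Matrix.conjTranspose_apply, hK.apply i j]
  set T := Matrix.toEuclideanLin K with hT
  have hadj : LinearMap.adjoint T = T := by
    rw [hT, ← Matrix.toEuclideanLin_conjTranspose_eq_adjoint, hH]
  set W := LinearMap.range T with hW
  have hWperp : ∀ w, w ∈ Wᗮ → T w = 0 := by
    intro w hw
    have h1 : ∀ x : EuclideanSpace ℝ (Fin n), (inner ℝ x (T w) : ℝ) = 0 := by
      intro x
      have h2 : (inner ℝ (T x) w : ℝ) = 0 := hw (T x) ⟨x, rfl⟩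
      calc (inner ℝ x (T w) : ℝ) = inner ℝ (LinearMap.adjoint T x) w := by
            rw [LinearMap.adjoint_inner_left]
        _ = inner ℝ (T x) w := by rw [hadj]
        _ = 0 := h2
    have := h1 (T w)
    rwa [inner_self_eq_zero] at this
  have hf : ((WithLp.equiv 2 (Fin n → ℝ)).symm f) ∈ Wᗮᗮ := by
    intro w hw
    have hTw := hWperp w hw
    have hmv : K.mulVec (WithLp.equiv 2 (Fin n → ℝ) w) = 0 := by
      have := congrArg (WithLp.equiv 2 (Fin n → ℝ)) hTw
      simpa [hT, Matrix.toEuclideanLin_apply] using this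
    have hfv := h _ hmv
    show (inner ℝ w ((WithLp.equiv 2 (Fin n → ℝ)).symm f) : ℝ) = 0
    simpa [PiLp.inner_apply, RCLike.inner_apply, dotProduct, mul_comm] using hfv
  rw [Submodule.orthogonal_orthogonal] at hf
  obtain ⟨u, hu⟩ := hf
  refine ⟨WithLp.equiv 2 (Fin n → ℝ) u, ?_⟩
  have := congrArg (WithLp.equiv 2 (Fin n → ℝ)) hu
  simpa [hT, Matrix.toEuclideanLin_apply] using this

lemma quadArrow {n : ℕ} (K : Matrix (Fin n) (Fin n) ℝ) (f : Fin n → ℝ) (γ : ℝ)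
    (v : Fin n → ℝ) (t : ℝ) :
    Sum.elim v (fun _ => t) ⬝ᵥ (ArrowMat K f γ).mulVec (Sum.elim v (fun _ => t)) =
      v ⬝ᵥ K.mulVec v + t * (f ⬝ᵥ v) + t * (f ⬝ᵥ v) + t * t * γ := by
  rw [ArrowMat, fromBlocks_mulVec, sumElim_dotProduct_sumElim]
  simp [Matrix.mulVec, dotProduct, Finset.mul_sum, Finset.sum_add_distrib, mul_add]
  rw [show ∑ x, v x * (f x * t) = ∑ i, t * (f i * v i) from
    Finset.sum_congr rfl fun i _ => by ring]
  ring

theorem stmt6 (n : ℕ) (K : Matrix (Fin n) (Fin n) ℝ) (hK : K.IsSymm)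
    (f : Fin n → ℝ) (γ : ℝ) :
    (ArrowMat K f γ).PosSemidef ↔
      K.PosSemidef ∧ ∃ u : Fin n → ℝ, K.mulVec u = f ∧ f ⬝ᵥ u ≤ γ := by
  have hH : K.IsHermitian := by
    ext i j; simp [Matrix.conjTranspose_apply, hK.apply i j]
  constructor
  · intro hZ
    have hQ : ∀ (v : Fin n → ℝ) (t : ℝ),
        0 ≤ v ⬝ᵥ K.mulVec v + t * (f ⬝ᵥ v) + t * (f ⬝ᵥ v) + t * t * γ := by
      intro v t
      have := hZ.dotProduct_mulVec_nonneg (Sum.elim v fun _ => t)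
      rw [show star (Sum.elim v fun _ => t) = Sum.elim v fun _ => t from star_trivial _] at this
      rwa [quadArrow] at this
    have hKpsd : K.PosSemidef := by
      refine .of_dotProduct_mulVec_nonneg hH fun x => ?_
      have := hQ x 0
      simpa [star_trivial] using this
    have hrange : ∃ u, K.mulVec u = f := by
      refine exists_mulVec_eq_aux K hK f fun v hv => ?_
      by_contra hne
      set a := f ⬝ᵥ v with ha
      have key : ∀ t : ℝ, 0 ≤ t * a + t * a + γ := by
        intro t
        have := hQ (t • v) 1
        rw [Matrix.mulVec_smul, dotProduct_smul, smul_dotProduct] at this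
        simp [hv, smul_eq_mul] at this
        linarith
      have := key ((-γ - 1) / (2 * a))
      rw [show (-γ - 1) / (2 * a) * a + (-γ - 1) / (2 * a) * a + γ = -1 by
        field_simp; ring] at this
      linarith
    obtain ⟨u, hu⟩ := hrange
    refine ⟨hKpsd, u, hu, ?_⟩
    have := hQ (-u) 1
    rw [Matrix.mulVec_neg, dotProduct_neg, neg_dotProduct, hu] at this
    have hcomm : u ⬝ᵥ f = f ⬝ᵥ u := dotProduct_comm u f
    simp only [dotProduct_neg, mul_neg, mul_one, one_mul, neg_neg] at this
    linarith
  · rintro ⟨hKpsd, u, hu, hle⟩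
    have hmulu : ∀ w : Fin n → ℝ, u ⬝ᵥ K.mulVec w = f ⬝ᵥ w := by
      intro w
      rw [Matrix.dotProduct_mulVec, ← hu]
      congr 1
      rw [← Matrix.mulVec_transpose, hK]
    refine Matrix.PosSemidef.of_dotProduct_mulVec_nonneg ?_ ?_
    · ext i j
      cases i <;> cases j <;>
        simp [ArrowMat, Matrix.conjTranspose_apply, Matrix.fromBlocks, hK.apply]
    · intro x
      set v : Fin n → ℝ := x ∘ Sum.inl with hv
      set t : ℝ := x (Sum.inr ⟨⟩) with ht
      have hx : x = Sum.elim v fun _ => t := by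
        funext i
        cases i with
        | inl i => rfl
        | inr u => cases u; rfl
      rw [show star x = x from star_trivial _, hx, quadArrow]
      have h1 := hKpsd.dotProduct_mulVec_nonneg (v + t • u)
      rw [show star (v + t • u) = v + t • u from star_trivial _] at h1
      have e1 : (v + t • u) ⬝ᵥ K.mulVec (v + t • u) =
          v ⬝ᵥ K.mulVec v + t * (f ⬝ᵥ v) + t * (f ⬝ᵥ v) + t * t * (f ⬝ᵥ u) := by
        rw [Matrix.mulVec_add, Matrix.mulVec_smul, dotProduct_add,
          add_dotProduct, add_dotProduct, dotProduct_smul,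
          smul_dotProduct, smul_dotProduct, dotProduct_smul,
          hmulu, hmulu, hu]
        have : v ⬝ᵥ f = f ⬝ᵥ v := dotProduct_comm v f
        rw [this]
        simp [smul_eq_mul]
        ring
      rw [e1] at h1
      have h3 : 0 ≤ t * t * (γ - f ⬝ᵥ u) :=
        mul_nonneg (mul_self_nonneg t) (by linarith)
      nlinarith [h1, h3]
end

section
/- With the topology-optimization data below, suppose (x̃, ũ, γ̃) is an optimal solution of problem (P1), i.e., it is feasible for (P1) and γ̃ ≤ γ for every (x, u, γ) feasible for (P1). Then there exist γ̃₁, γ̃₂ ∈ ℝ and g̃ ∈ ℝⁿ supported on N₁ ∩ N₂ such that γ̃ = γ̃₁ + γ̃₂ and (x̃, ũ, γ̃₁, γ̃₂, g̃) is an optimal solution of problem (P2), i.e., it is feasible for (P2) and γ̃₁ + γ̃₂ ≤ γ₁ + γ₂ for every (x, u, γ₁, γ₂, g) feasible for (P2). -/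
open Matrix

/-- A vector is supported on `I` if `v i = 0` for every `i ∉ I`. -/
def VecSupportedOn {n : ℕ} (v : Fin n → ℝ) (I : Finset (Fin n)) : Prop :=
  ∀ i, i ∉ I → v i = 0

/-- Feasibility for problem (P1): minimize `γ` subject to
`(Σ xᵢ Kᵢ) u = f`, `fᵀu ≤ γ`, `Σ xᵢ ≤ V`, `x̲ᵢ ≤ xᵢ ≤ x̄ᵢ`. -/
def P1Feasible {n m : ℕ} (K : Fin m → Matrix (Fin n) (Fin n) ℝ) (f : Fin n → ℝ)
    (V : ℝ) (xlo xhi : Fin m → ℝ) (x : Fin m → ℝ) (u : Fin n → ℝ) (γ : ℝ) : Prop :=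
  (∑ i, x i • K i).mulVec u = f ∧ f ⬝ᵥ u ≤ γ ∧ (∑ i, x i) ≤ V ∧
    ∀ i, xlo i ≤ x i ∧ x i ≤ xhi i

/-- Feasibility for problem (P2): minimize `γ₁ + γ₂` subject to
`g` supported on `N₁ ∩ N₂`, `(Σ_{i∈𝒟₁} xᵢ Kᵢ) u = f⁽¹⁾ + g`,
`(Σ_{i∈𝒟₂} xᵢ Kᵢ) u = f⁽²⁾ − g`, `(f⁽¹⁾+g)ᵀu ≤ γ₁`, `(f⁽²⁾−g)ᵀu ≤ γ₂`,
`Σ xᵢ ≤ V`, `x̲ᵢ ≤ xᵢ ≤ x̄ᵢ`. -/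
def P2Feasible {n m : ℕ} (K : Fin m → Matrix (Fin n) (Fin n) ℝ)
    (D₁ D₂ : Finset (Fin m)) (N₁ N₂ : Finset (Fin n))
    (f₁ f₂ : Fin n → ℝ) (V : ℝ) (xlo xhi : Fin m → ℝ)
    (x : Fin m → ℝ) (u : Fin n → ℝ) (γ₁ γ₂ : ℝ) (g : Fin n → ℝ) : Prop :=
  VecSupportedOn g (N₁ ∩ N₂) ∧
  (∑ i ∈ D₁, x i • K i).mulVec u = f₁ + g ∧
  (∑ i ∈ D₂, x i • K i).mulVec u = f₂ - g ∧
  (f₁ + g) ⬝ᵥ u ≤ γ₁ ∧ (f₂ - g) ⬝ᵥ u ≤ γ₂ ∧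
  (∑ i, x i) ≤ V ∧ ∀ i, xlo i ≤ x i ∧ x i ≤ xhi i

theorem stmt8 (n m : ℕ) (K : Fin m → Matrix (Fin n) (Fin n) ℝ)
    (hKsymm : ∀ i, (K i).IsSymm) (hKpsd : ∀ i, (K i).PosSemidef)
    (D₁ D₂ : Finset (Fin m)) (hD : D₁ ∪ D₂ = Finset.univ) (hDdisj : D₁ ∩ D₂ = ∅)
    (N₁ N₂ : Finset (Fin n)) (hN : N₁ ∪ N₂ = Finset.univ)
    (hK₁ : ∀ i ∈ D₁, MatSupportedOn (K i) N₁)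
    (hK₂ : ∀ i ∈ D₂, MatSupportedOn (K i) N₂)
    (f₁ f₂ : Fin n → ℝ)
    (hf₁ : VecSupportedOn f₁ N₁) (hf₂ : VecSupportedOn f₂ N₂)
    (V : ℝ) (xlo xhi : Fin m → ℝ)
    (xt : Fin m → ℝ) (ut : Fin n → ℝ) (γt : ℝ)
    (hfeas : P1Feasible K (f₁ + f₂) V xlo xhi xt ut γt)
    (hopt : ∀ x u γ, P1Feasible K (f₁ + f₂) V xlo xhi x u γ → γt ≤ γ) :
    ∃ γ₁ γ₂ : ℝ, ∃ g : Fin n → ℝ,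
      VecSupportedOn g (N₁ ∩ N₂) ∧ γt = γ₁ + γ₂ ∧
      P2Feasible K D₁ D₂ N₁ N₂ f₁ f₂ V xlo xhi xt ut γ₁ γ₂ g ∧
      ∀ x u γ₁' γ₂' g', P2Feasible K D₁ D₂ N₁ N₂ f₁ f₂ V xlo xhi x u γ₁' γ₂' g' →
        γ₁ + γ₂ ≤ γ₁' + γ₂' := by
  classical
  obtain ⟨heq, hfu, hV, hbox⟩ := hfeas
  have hdisj : Disjoint D₁ D₂ := Finset.disjoint_iff_inter_eq_empty.mpr hDdisj
  have hsplit : ∀ x : Fin m → ℝ, (∑ i : Fin m, x i • K i) =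
      (∑ i ∈ D₁, x i • K i) + (∑ i ∈ D₂, x i • K i) := by
    intro x; rw [← Finset.sum_union hdisj, hD]
  set A₁ := ∑ i ∈ D₁, xt i • K i with hA₁def
  set A₂ := ∑ i ∈ D₂, xt i • K i with hA₂def
  set g : Fin n → ℝ := A₁.mulVec ut - f₁ with hgdef
  have hA1u : A₁.mulVec ut = f₁ + g := by
    funext i; simp [hgdef]
  have hsum : A₁.mulVec ut + A₂.mulVec ut = f₁ + f₂ := by
    rw [← Matrix.add_mulVec, ← hsplit, heq]
  have hA2u : A₂.mulVec ut = f₂ - g := by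
    have h : A₂.mulVec ut = (f₁ + f₂) - A₁.mulVec ut := by
      rw [← hsum]; abel
    rw [h, hA1u]; abel
  have hA1supp : ∀ i, i ∉ N₁ → A₁.mulVec ut i = 0 := by
    intro i hi
    simp only [Matrix.mulVec, dotProduct]
    apply Finset.sum_eq_zero
    intro j _
    have hz : A₁ i j = 0 := by
      rw [hA₁def, Matrix.sum_apply]
      exact Finset.sum_eq_zero fun k hk => by
        simp [hK₁ k hk i j (Or.inl hi)]
    rw [hz]; ring
  have hA2supp : ∀ i, i ∉ N₂ → A₂.mulVec ut i = 0 := by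
    intro i hi
    simp only [Matrix.mulVec, dotProduct]
    apply Finset.sum_eq_zero
    intro j _
    have hz : A₂ i j = 0 := by
      rw [hA₂def, Matrix.sum_apply]
      exact Finset.sum_eq_zero fun k hk => by
        simp [hK₂ k hk i j (Or.inl hi)]
    rw [hz]; ring
  have hgsupp : VecSupportedOn g (N₁ ∩ N₂) := by
    intro i hi
    rw [Finset.mem_inter] at hi
    push_neg at hi
    by_cases h1 : i ∈ N₁
    · have h2 : i ∉ N₂ := hi h1
      have := congrFun hA2u i
      have hfi : f₂ i = 0 := hf₂ i h2
      have hAi : A₂.mulVec ut i = 0 := hA2supp i h2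
      simp [hAi, hfi] at this
      linarith [this]
    · have := hA1supp i h1
      simp [hgdef, this, hf₁ i h1]
  refine ⟨(f₁ + g) ⬝ᵥ ut, γt - (f₁ + g) ⬝ᵥ ut, g, hgsupp, by ring, ?_, ?_⟩
  · refine ⟨hgsupp, hA1u, hA2u, le_refl _, ?_, hV, hbox⟩
    have hdot : (f₁ + g) ⬝ᵥ ut + (f₂ - g) ⬝ᵥ ut = (f₁ + f₂) ⬝ᵥ ut := by
      rw [← add_dotProduct]
      congr 1; abel
    linarith
  · intro x u γ₁' γ₂' g' hP2
    obtain ⟨hg', he1, he2, hd1, hd2, hV', hbox'⟩ := hP2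
    have hP1 : P1Feasible K (f₁ + f₂) V xlo xhi x u (γ₁' + γ₂') := by
      refine ⟨?_, ?_, hV', hbox'⟩
      · rw [hsplit x, Matrix.add_mulVec, he1, he2]; abel
      · have hdot : (f₁ + f₂) ⬝ᵥ u = (f₁ + g') ⬝ᵥ u + (f₂ - g') ⬝ᵥ u := by
          rw [← add_dotProduct]
          congr 1; abel
        linarith
    have := hopt x u (γ₁' + γ₂') hP1
    linarith
end

section
/- With the topology-optimization data below, suppose (x̂, û, γ̂₁, γ̂₂, ĝ) is an optimal solution of problem (P2), i.e., it is feasible for (P2) and γ̂₁ + γ̂₂ ≤ γ₁ + γ₂ for every (x, u, γ₁, γ₂, g) feasible for (P2). Then (x̂, û, γ̂₁ + γ̂₂) is an optimal solution of problem (P1), i.e., it is feasible for (P1) and γ̂₁ + γ̂₂ ≤ γ for every (x, u, γ) feasible for (P1). -/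
open Matrix

lemma sum_mulVec_supported {n m : ℕ} (K : Fin m → Matrix (Fin n) (Fin n) ℝ)
    (S : Finset (Fin m)) (N : Finset (Fin n)) (hK : ∀ i ∈ S, MatSupportedOn (K i) N)
    (x : Fin m → ℝ) (u : Fin n → ℝ) :
    VecSupportedOn ((∑ i ∈ S, x i • K i).mulVec u) N := by
  intro i hi
  simp only [Matrix.mulVec, dotProduct]
  apply Finset.sum_eq_zero
  intro j _
  have : (∑ k ∈ S, x k • K k) i j = 0 := by
    rw [Matrix.sum_apply]
    apply Finset.sum_eq_zero
    intro k hk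
    simp [hK k hk i j (Or.inl hi)]
  rw [this, zero_mul]

theorem stmt9 (n m : ℕ) (K : Fin m → Matrix (Fin n) (Fin n) ℝ)
    (hKsymm : ∀ i, (K i).IsSymm) (hKpsd : ∀ i, (K i).PosSemidef)
    (D₁ D₂ : Finset (Fin m)) (hD : D₁ ∪ D₂ = Finset.univ) (hDdisj : D₁ ∩ D₂ = ∅)
    (N₁ N₂ : Finset (Fin n)) (hN : N₁ ∪ N₂ = Finset.univ)
    (hK₁ : ∀ i ∈ D₁, MatSupportedOn (K i) N₁)
    (hK₂ : ∀ i ∈ D₂, MatSupportedOn (K i) N₂)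
    (f₁ f₂ : Fin n → ℝ)
    (hf₁ : VecSupportedOn f₁ N₁) (hf₂ : VecSupportedOn f₂ N₂)
    (V : ℝ) (xlo xhi : Fin m → ℝ)
    (xh : Fin m → ℝ) (uh : Fin n → ℝ) (γh₁ γh₂ : ℝ) (gh : Fin n → ℝ)
    (hfeas : P2Feasible K D₁ D₂ N₁ N₂ f₁ f₂ V xlo xhi xh uh γh₁ γh₂ gh)
    (hopt : ∀ x u γ₁ γ₂ g, P2Feasible K D₁ D₂ N₁ N₂ f₁ f₂ V xlo xhi x u γ₁ γ₂ g →
      γh₁ + γh₂ ≤ γ₁ + γ₂) :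
    P1Feasible K (f₁ + f₂) V xlo xhi xh uh (γh₁ + γh₂) ∧
    ∀ x u γ, P1Feasible K (f₁ + f₂) V xlo xhi x u γ → γh₁ + γh₂ ≤ γ := by
  obtain ⟨hgsup, heq1, heq2, hγ1, hγ2, hvol, hbox⟩ := hfeas
  have hdisj : Disjoint D₁ D₂ := Finset.disjoint_iff_inter_eq_empty.mpr hDdisj
  have hsplit : ∀ (x : Fin m → ℝ), (∑ i, x i • K i) =
      (∑ i ∈ D₁, x i • K i) + (∑ i ∈ D₂, x i • K i) := by
    intro x
    rw [← Finset.sum_union hdisj, hD]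
  constructor
  · refine ⟨?_, ?_, hvol, hbox⟩
    · rw [hsplit, Matrix.add_mulVec, heq1, heq2]
      abel
    · have : (f₁ + f₂) ⬝ᵥ uh = (f₁ + gh) ⬝ᵥ uh + (f₂ - gh) ⬝ᵥ uh := by
        rw [← add_dotProduct]
        congr 1
        abel
      rw [this]
      exact add_le_add hγ1 hγ2
  · rintro x u γ ⟨heq, hγ, hvol', hbox'⟩
    set g : Fin n → ℝ := (∑ i ∈ D₁, x i • K i).mulVec u - f₁ with hg
    have hK1sup := sum_mulVec_supported K D₁ N₁ hK₁ x u
    have hK2sup := sum_mulVec_supported K D₂ N₂ hK₂ x u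
    have heq2' : (∑ i ∈ D₂, x i • K i).mulVec u = f₂ - g := by
      have := heq
      rw [hsplit, Matrix.add_mulVec] at this
      funext i
      have hi := congrFun this i
      simp only [hg, Pi.add_apply, Pi.sub_apply] at hi ⊢
      linarith
    have hgsup' : VecSupportedOn g (N₁ ∩ N₂) := by
      intro i hi
      rw [Finset.mem_inter] at hi
      push_neg at hi
      by_cases h1 : i ∈ N₁
      · have h2 := hi h1
        have hx := congrFun heq2' i
        simp only [Pi.sub_apply] at hx
        linarith [hK2sup i h2, hf₂ i h2]
      · simp only [hg, Pi.sub_apply, hK1sup i h1, hf₁ i h1, sub_zero]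
    have hP2 : P2Feasible K D₁ D₂ N₁ N₂ f₁ f₂ V xlo xhi x u
        ((f₁ + g) ⬝ᵥ u) ((f₂ - g) ⬝ᵥ u) g := by
      refine ⟨hgsup', ?_, heq2', le_refl _, le_refl _, hvol', hbox'⟩
      simp [hg]
    have := hopt x u _ _ g hP2
    have hsum : (f₁ + g) ⬝ᵥ u + (f₂ - g) ⬝ᵥ u = (f₁ + f₂) ⬝ᵥ u := by
      rw [← add_dotProduct]
      congr 1
      abel
    linarith
end
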